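/- Assume K = K̃ and suppose the offspring distributions q, q̃ have finite exponential moments (E[e^{sξ}] < ∞ for some s > 0 when ξ is distributed according to q, respectively q̃). For every compact set C contained in the open first quadrant (0,∞)² and every a > 0, there exist w > 0 and K₀ > 0 such that for all K ∈ (0, K₀) and all integers m, n ≥ 1 with (K·m, K·n) ∈ C, the one-step transition from (m, n) satisfies P( |K·U₁ − (K m)·exp(r − K m − b·K n)| > a or |K·V₁ − (K n)·exp(r̃ − a·K m − K n)| > a | (U₀,V₀) = (m,n) ) ≤ exp(−w/K); that is, the normed chain (K U_t, K V_t) follows the deterministic Ricker competition map F up to error a with probability at least 1 − e^{−w/K}. -/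

import Mathlib

open Filter

/-- The modified offspring distribution: given inhibition exponent c, the litter size has
P(ξ = k) = e^{−c}·q(k) for k ≥ 1 and P(ξ = 0) = 1 − e^{−c}·(1 − q(0)). -/
noncomputable def modPMF (c : ℝ) (q : ℕ → ℝ) : ℕ → ℝ :=
  fun k => if k = 0 then 1 - Real.exp (-c) * (1 - q 0) else Real.exp (-c) * q k

/-- `convPow f m` is the m-fold convolution power of the pmf `f` on ℕ: the distribution of
the sum of m i.i.d. random variables with pmf `f` (the point mass at 0 when m = 0). -/
noncomputable def convPow (f : ℕ → ℝ) : ℕ → ℕ → ℝ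
  | 0, k => if k = 0 then 1 else 0
  | m + 1, k => ∑ i ∈ Finset.range (k + 1), f i * convPow f m (k - i)

/-- The transition probabilities of the stochastic Ricker competition chain (U_t, V_t) on
ℤ_{≥0}²: from (m,n), U_{t+1} is a sum of m i.i.d. litters with pmf `modPMF (K(m+bn)) q` and,
independently, V_{t+1} is a sum of n i.i.d. litters with pmf `modPMF (K̃(am+n)) q̃`
(a coordinate equal to 0 stays 0). -/
noncomputable def rickerKernel (a b K K' : ℝ) (q q' : ℕ → ℝ) :
    ℕ × ℕ → ℕ × ℕ → ℝ :=
  fun p p' =>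
    convPow (modPMF (K * ((p.1 : ℝ) + b * (p.2 : ℝ))) q) p.1 p'.1 *
    convPow (modPMF (K' * (a * (p.1 : ℝ) + (p.2 : ℝ))) q') p.2 p'.2

/-- t-step transition probabilities of a Markov kernel on ℤ_{≥0}². -/
noncomputable def kernelPow (P : ℕ × ℕ → ℕ × ℕ → ℝ) : ℕ → ℕ × ℕ → ℕ × ℕ → ℝ
  | 0, p, p' => if p = p' then 1 else 0
  | t + 1, p, p' => ∑' s : ℕ × ℕ, P p s * kernelPow P t s p'

/-! ### Auxiliary lemmas -/

lemma myExpTaylor {x y : ℝ} (h : |x| ≤ y) : Real.exp x - 1 - x ≤ x ^ 2 * Real.exp y := by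
  have hy : 0 ≤ y := le_trans (abs_nonneg x) h
  have hey : 1 ≤ Real.exp y := Real.one_le_exp hy
  by_cases h1 : |x| ≤ 1
  · have h2 : Real.exp x - 1 - x ≤ x ^ 2 :=
      le_trans (le_abs_self _) (Real.abs_exp_sub_one_sub_id_le h1)
    nlinarith [sq_nonneg x]
  · push_neg at h1
    have hx2 : 1 ≤ x ^ 2 := by nlinarith [sq_abs x]
    rcases le_or_gt x 0 with hx | hx
    · have hex : Real.exp x ≤ 1 := Real.exp_le_one_iff.mpr hx
      have habs : -x ≤ x ^ 2 := by nlinarith [abs_of_nonpos hx, sq_abs x]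
      nlinarith
    · have hex : Real.exp x ≤ Real.exp y := Real.exp_le_exp.mpr (le_trans (le_abs_self x) h)
      nlinarith [Real.exp_pos x]

lemma mySqLeExp {t : ℝ} (ht : 0 < t) (k : ℕ) :
    (k : ℝ) ^ 2 ≤ (2 / t) ^ 2 * Real.exp (t * k) := by
  have hu0 : 0 ≤ t * (k : ℝ) / 2 := by positivity
  have hu : t * (k : ℝ) / 2 ≤ Real.exp (t * k / 2) := by
    nlinarith [Real.add_one_le_exp (t * (k : ℝ) / 2)]
  have h1 : (t * (k : ℝ) / 2) ^ 2 ≤ Real.exp (t * k / 2) ^ 2 :=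
    pow_le_pow_left₀ hu0 hu 2
  have h2 : Real.exp (t * (k : ℝ) / 2) ^ 2 = Real.exp (t * k) := by
    rw [sq, ← Real.exp_add, show t * (k : ℝ) / 2 + t * (k : ℝ) / 2 = t * k by ring]
  have h3 : (k : ℝ) ^ 2 = (2 / t) ^ 2 * (t * (k : ℝ) / 2) ^ 2 := by
    field_simp
  rw [h3, ← h2]
  have h4 : (0 : ℝ) ≤ (2 / t) ^ 2 := by positivity
  nlinarith [h1]

lemma convPow_nonneg {f : ℕ → ℝ} (hf : ∀ k, 0 ≤ f k) (m : ℕ) : ∀ k, 0 ≤ convPow f m k := by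
  induction m with
  | zero => intro k; simp only [convPow]; split <;> norm_num
  | succ m ih =>
    intro k
    simp only [convPow]
    exact Finset.sum_nonneg fun i _ => mul_nonneg (hf i) (ih _)

lemma modPMF_eq (c : ℝ) (q : ℕ → ℝ) (k : ℕ) :
    modPMF c q k = Real.exp (-c) * q k + (if k = 0 then 1 - Real.exp (-c) else 0) := by
  unfold modPMF
  by_cases h : k = 0 <;> simp [h] <;> ring

lemma modPMF_nonneg {c : ℝ} (hc : 0 ≤ c) {q : ℕ → ℝ} (hq : ∀ k, 0 ≤ q k)
    (hq1 : HasSum q 1) (k : ℕ) : 0 ≤ modPMF c q k := by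
  have hq0 : q 0 ≤ 1 := le_hasSum hq1 0 fun j _ => hq j
  have he : Real.exp (-c) ≤ 1 := Real.exp_le_one_iff.mpr (by linarith)
  have he0 : (0 : ℝ) < Real.exp (-c) := Real.exp_pos _
  unfold modPMF
  split
  · have h1 : Real.exp (-c) * (1 - q 0) ≤ 1 - q 0 :=
      mul_le_of_le_one_left (by linarith) he
    linarith [hq 0]
  · exact mul_nonneg he0.le (hq _)

lemma hasSum_exp_modPMF {q : ℕ → ℝ} {s Q : ℝ}
    (hQ : HasSum (fun k : ℕ => Real.exp (s * k) * q k) Q) (c : ℝ) :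
    HasSum (fun k : ℕ => Real.exp (s * k) * modPMF c q k)
      (1 + Real.exp (-c) * (Q - 1)) := by
  have h : (fun k : ℕ => Real.exp (s * k) * modPMF c q k)
      = fun k : ℕ => Real.exp (-c) * (Real.exp (s * k) * q k)
          + (if k = 0 then 1 - Real.exp (-c) else 0) := by
    funext k
    rw [modPMF_eq]
    by_cases h : k = 0 <;> simp [h] <;> ring
  rw [h]
  have h2 := (hQ.mul_left (Real.exp (-c))).add (hasSum_ite_eq 0 (1 - Real.exp (-c)))
  convert h2 using 1
  · rfl
  · ring

lemma hasSum_exp_convPow {f : ℕ → ℝ} (hf : ∀ k, 0 ≤ f k) {s M : ℝ}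
    (hM : HasSum (fun k : ℕ => Real.exp (s * k) * f k) M) (m : ℕ) :
    HasSum (fun k : ℕ => Real.exp (s * k) * convPow f m k) (M ^ m) := by
  induction m with
  | zero =>
    have h : (fun k : ℕ => Real.exp (s * k) * convPow f 0 k)
        = fun k : ℕ => if k = 0 then (1 : ℝ) else 0 := by
      funext k
      simp only [convPow]
      by_cases h : k = 0 <;> simp [h]
    rw [h, pow_zero]
    exact hasSum_ite_eq 0 1
  | succ m ih =>
    have hnn : ∀ k : ℕ, 0 ≤ Real.exp (s * k) * f k :=
      fun k => mul_nonneg (Real.exp_pos _).le (hf k)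
    have hnn2 : ∀ k : ℕ, 0 ≤ Real.exp (s * k) * convPow f m k :=
      fun k => mul_nonneg (Real.exp_pos _).le (convPow_nonneg hf m k)
    have hnorm1 : Summable fun k : ℕ => ‖Real.exp (s * k) * f k‖ := by
      refine hM.summable.congr fun k => ?_
      rw [Real.norm_eq_abs, abs_of_nonneg (hnn k)]
    have hnorm2 : Summable fun k : ℕ => ‖Real.exp (s * k) * convPow f m k‖ := by
      refine ih.summable.congr fun k => ?_
      rw [Real.norm_eq_abs, abs_of_nonneg (hnn2 k)]
    have key := hasSum_sum_range_mul_of_summable_norm hnorm1 hnorm2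
    have heq : (fun n : ℕ => ∑ k ∈ Finset.range (n + 1),
        (Real.exp (s * k) * f k) * (Real.exp (s * ((n - k : ℕ) : ℝ)) * convPow f m (n - k)))
        = fun n : ℕ => Real.exp (s * n) * convPow f (m + 1) n := by
      funext n
      simp only [convPow, Finset.mul_sum]
      refine Finset.sum_congr rfl fun i hi => ?_
      have hile : i ≤ n := Nat.lt_succ_iff.mp (Finset.mem_range.mp hi)
      have hcast : ((n - i : ℕ) : ℝ) = (n : ℝ) - (i : ℝ) := Nat.cast_sub hile
      rw [hcast, show s * (n : ℝ) = s * (i : ℝ) + s * ((n : ℝ) - (i : ℝ)) by ring,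
        Real.exp_add]
      ring
    rw [heq] at key
    rw [hM.tsum_eq, ih.tsum_eq] at key
    have hfin : M * M ^ m = M ^ (m + 1) := by ring
    rwa [hfin] at key

lemma tsum_upper_tail {g : ℕ → ℝ} (hg : ∀ k, 0 ≤ g k) {s M : ℝ} (hs : 0 ≤ s) (T : ℝ)
    (hM : HasSum (fun k : ℕ => Real.exp (s * k) * g k) M) :
    (∑' k : ℕ, if T < (k : ℝ) then g k else 0) ≤ Real.exp (-(s * T)) * M := by
  have hb : ∀ k : ℕ, (if T < (k : ℝ) then g k else 0)
      ≤ Real.exp (-(s * T)) * (Real.exp (s * k) * g k) := by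
    intro k
    split
    · rename_i h
      have hst : s * T ≤ s * k := mul_le_mul_of_nonneg_left h.le hs
      have h1 : (1 : ℝ) ≤ Real.exp (-(s * T)) * Real.exp (s * k) := by
        rw [← Real.exp_add]
        exact Real.one_le_exp (by linarith)
      calc g k = g k * 1 := by ring
        _ ≤ g k * (Real.exp (-(s * T)) * Real.exp (s * k)) :=
            mul_le_mul_of_nonneg_left h1 (hg k)
        _ = Real.exp (-(s * T)) * (Real.exp (s * k) * g k) := by ring
    · exact mul_nonneg (Real.exp_pos _).le (mul_nonneg (Real.exp_pos _).le (hg k))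
  have hnn : ∀ k : ℕ, 0 ≤ (if T < (k : ℝ) then g k else 0) := by
    intro k; split; exacts [hg _, le_rfl]
  have hsum2 := hM.mul_left (Real.exp (-(s * T)))
  calc (∑' k : ℕ, if T < (k : ℝ) then g k else 0)
      ≤ ∑' k : ℕ, Real.exp (-(s * T)) * (Real.exp (s * k) * g k) :=
        Summable.tsum_le_tsum hb (Summable.of_nonneg_of_le hnn hb hsum2.summable) hsum2.summable
    _ = Real.exp (-(s * T)) * M := hsum2.tsum_eq

lemma tsum_lower_tail {g : ℕ → ℝ} (hg : ∀ k, 0 ≤ g k) {s M : ℝ} (hs : 0 ≤ s) (T : ℝ)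
    (hM : HasSum (fun k : ℕ => Real.exp (-s * k) * g k) M) :
    (∑' k : ℕ, if (k : ℝ) < T then g k else 0) ≤ Real.exp (s * T) * M := by
  have hb : ∀ k : ℕ, (if (k : ℝ) < T then g k else 0)
      ≤ Real.exp (s * T) * (Real.exp (-s * k) * g k) := by
    intro k
    split
    · rename_i h
      have hst : s * k ≤ s * T := mul_le_mul_of_nonneg_left h.le hs
      have h1 : (1 : ℝ) ≤ Real.exp (s * T) * Real.exp (-s * k) := by
        rw [← Real.exp_add]
        exact Real.one_le_exp (by nlinarith)
      calc g k = g k * 1 := by ring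
        _ ≤ g k * (Real.exp (s * T) * Real.exp (-s * k)) :=
            mul_le_mul_of_nonneg_left h1 (hg k)
        _ = Real.exp (s * T) * (Real.exp (-s * k) * g k) := by ring
    · exact mul_nonneg (Real.exp_pos _).le (mul_nonneg (Real.exp_pos _).le (hg k))
  have hnn : ∀ k : ℕ, 0 ≤ (if (k : ℝ) < T then g k else 0) := by
    intro k; split; exacts [hg _, le_rfl]
  have hsum2 := hM.mul_left (Real.exp (s * T))
  calc (∑' k : ℕ, if (k : ℝ) < T then g k else 0)
      ≤ ∑' k : ℕ, Real.exp (s * T) * (Real.exp (-s * k) * g k) :=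
        Summable.tsum_le_tsum hb (Summable.of_nonneg_of_le hnn hb hsum2.summable) hsum2.summable
    _ = Real.exp (s * T) * M := hsum2.tsum_eq

lemma hasSum_convPow_modPMF {c : ℝ} (hc : 0 ≤ c) {q : ℕ → ℝ} (hq : ∀ k, 0 ≤ q k)
    (hq1 : HasSum q 1) (m : ℕ) : HasSum (convPow (modPMF c q) m) 1 := by
  have h0 : HasSum (fun k : ℕ => Real.exp (0 * k) * q k) 1 := by simpa using hq1
  have h1 := hasSum_exp_convPow (modPMF_nonneg hc hq hq1) (hasSum_exp_modPMF h0 c) m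
  simpa using h1

/-- The key one-coordinate large-deviation estimate: uniformly over inhibition exponents
c ≥ 0, the sum of m i.i.d. `modPMF c q` litters deviates from its mean m·e^{-c}·E by more
than δ with probability at most `2·exp(m·A·s² - s·δ)`. -/
lemma coord_dev_bound {q : ℕ → ℝ} (hq : ∀ k, 0 ≤ q k) (hq1 : HasSum q 1)
    {E : ℝ} (hmean : HasSum (fun k : ℕ => (k : ℝ) * q k) E)
    {s₀ : ℝ} (hs₀ : 0 < s₀) (hS : Summable fun k : ℕ => Real.exp (s₀ * k) * q k)
    {A : ℝ} (hA : HasSum (fun k : ℕ => (k : ℝ) ^ 2 * Real.exp (s₀ / 2 * k) * q k) A)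
    {s : ℝ} (hs : 0 < s) (hss : s ≤ s₀ / 2)
    {c : ℝ} (hc : 0 ≤ c) (m : ℕ) {δ : ℝ} (hδ : 0 ≤ δ) :
    (∑' j : ℕ, if δ < |(j : ℝ) - (m : ℝ) * (Real.exp (-c) * E)| then
        convPow (modPMF c q) m j else 0)
      ≤ 2 * Real.exp ((m : ℝ) * A * s ^ 2 - s * δ) := by
  have hs0 : 0 ≤ s := hs.le
  have hec1 : Real.exp (-c) ≤ 1 := Real.exp_le_one_iff.mpr (by linarith)
  have hec0 : (0 : ℝ) < Real.exp (-c) := Real.exp_pos _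
  have hA0 : 0 ≤ A := hasSum_le
    (fun k => mul_nonneg (mul_nonneg (sq_nonneg _) (Real.exp_pos _).le) (hq k))
    hasSum_zero hA
  have hSp : Summable fun k : ℕ => Real.exp (s * k) * q k := by
    refine Summable.of_nonneg_of_le
      (fun k => mul_nonneg (Real.exp_pos _).le (hq k)) (fun k => ?_) hS
    refine mul_le_mul_of_nonneg_right ?_ (hq k)
    refine Real.exp_le_exp.mpr ?_
    have hk : (0 : ℝ) ≤ (k : ℝ) := Nat.cast_nonneg k
    nlinarith
  have hSm : Summable fun k : ℕ => Real.exp (-s * k) * q k := by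
    refine Summable.of_nonneg_of_le
      (fun k => mul_nonneg (Real.exp_pos _).le (hq k)) (fun k => ?_) hq1.summable
    have h1 : Real.exp (-s * k) ≤ 1 := by
      refine Real.exp_le_one_iff.mpr ?_
      have hk : (0 : ℝ) ≤ (k : ℝ) := Nat.cast_nonneg k
      nlinarith
    exact mul_le_of_le_one_left (hq k) h1
  set Qp := ∑' k : ℕ, Real.exp (s * k) * q k with hQpdef
  set Qm := ∑' k : ℕ, Real.exp (-s * k) * q k with hQmdef
  have hQp : HasSum (fun k : ℕ => Real.exp (s * k) * q k) Qp := hSp.hasSum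
  have hQm : HasSum (fun k : ℕ => Real.exp (-s * k) * q k) Qm := hSm.hasSum
  have hA2 : HasSum (fun k : ℕ => s ^ 2 * ((k : ℝ) ^ 2 * Real.exp (s₀ / 2 * k) * q k))
      (s ^ 2 * A) := hA.mul_left _
  have key_p : Qp - 1 - s * E ≤ s ^ 2 * A := by
    have h1 : HasSum (fun k : ℕ => (Real.exp (s * k) - 1 - s * k) * q k) (Qp - 1 - s * E) := by
      have h2 := (hQp.sub hq1).sub (hmean.mul_left s)
      have heq : (fun k : ℕ => Real.exp (s * k) * q k - q k - s * ((k : ℝ) * q k))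
          = fun k : ℕ => (Real.exp (s * k) - 1 - s * k) * q k := by
        funext k; ring
      rwa [heq] at h2
    refine hasSum_le (fun k => ?_) h1 hA2
    have hx : |s * (k : ℝ)| ≤ s₀ / 2 * k := by
      rw [abs_of_nonneg (by positivity)]
      exact mul_le_mul_of_nonneg_right hss (Nat.cast_nonneg k)
    have h3 := mul_le_mul_of_nonneg_right (myExpTaylor hx) (hq k)
    calc (Real.exp (s * k) - 1 - s * k) * q k
        ≤ ((s * k) ^ 2 * Real.exp (s₀ / 2 * k)) * q k := h3
      _ = s ^ 2 * ((k : ℝ) ^ 2 * Real.exp (s₀ / 2 * k) * q k) := by ring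
  have key_m : Qm - 1 + s * E ≤ s ^ 2 * A := by
    have h1 : HasSum (fun k : ℕ => (Real.exp (-s * k) - 1 + s * k) * q k) (Qm - 1 + s * E) := by
      have h2 := (hQm.sub hq1).add (hmean.mul_left s)
      have heq : (fun k : ℕ => Real.exp (-s * k) * q k - q k + s * ((k : ℝ) * q k))
          = fun k : ℕ => (Real.exp (-s * k) - 1 + s * k) * q k := by
        funext k; ring
      rwa [heq] at h2
    refine hasSum_le (fun k => ?_) h1 hA2
    have hx : |(-s) * (k : ℝ)| ≤ s₀ / 2 * k := by
      rw [show (-s) * (k : ℝ) = -(s * k) by ring, abs_neg, abs_of_nonneg (by positivity)]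
      exact mul_le_mul_of_nonneg_right hss (Nat.cast_nonneg k)
    have h3 := mul_le_mul_of_nonneg_right (myExpTaylor hx) (hq k)
    calc (Real.exp (-s * k) - 1 + s * k) * q k
        ≤ (((-s) * k) ^ 2 * Real.exp (s₀ / 2 * k)) * q k := by
          have heq2 : Real.exp ((-s) * (k : ℝ)) - 1 - ((-s) * k)
              = Real.exp (-s * k) - 1 + s * k := by ring
          rw [← heq2]; exact h3
      _ = s ^ 2 * ((k : ℝ) ^ 2 * Real.exp (s₀ / 2 * k) * q k) := by ring
  have hfnn : ∀ k, 0 ≤ modPMF c q k := modPMF_nonneg hc hq hq1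
  have hMp : HasSum (fun k : ℕ => Real.exp (s * k) * modPMF c q k)
      (1 + Real.exp (-c) * (Qp - 1)) := hasSum_exp_modPMF hQp c
  have hMm : HasSum (fun k : ℕ => Real.exp (-s * k) * modPMF c q k)
      (1 + Real.exp (-c) * (Qm - 1)) := hasSum_exp_modPMF hQm c
  set P := convPow (modPMF c q) m with hPdef
  have hPnn : ∀ j, 0 ≤ P j := convPow_nonneg hfnn m
  have hP1 : HasSum P 1 := hasSum_convPow_modPMF hc hq hq1 m
  have hMp' : HasSum (fun j : ℕ => Real.exp (s * j) * P j)
      ((1 + Real.exp (-c) * (Qp - 1)) ^ m) := hasSum_exp_convPow hfnn hMp m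
  have hMm' : HasSum (fun j : ℕ => Real.exp (-s * j) * P j)
      ((1 + Real.exp (-c) * (Qm - 1)) ^ m) := hasSum_exp_convPow hfnn hMm m
  set μ := Real.exp (-c) * E with hμdef
  have hMple : 1 + Real.exp (-c) * (Qp - 1) ≤ Real.exp (s * μ + A * s ^ 2) := by
    have h3 : Real.exp (-c) * (Qp - 1) ≤ Real.exp (-c) * (s * E + s ^ 2 * A) :=
      mul_le_mul_of_nonneg_left (by linarith) hec0.le
    have h4 := Real.add_one_le_exp (Real.exp (-c) * (s * E + s ^ 2 * A))
    have h5 : Real.exp (-c) * (s * E + s ^ 2 * A) ≤ s * μ + A * s ^ 2 := by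
      rw [hμdef]
      have h6 : Real.exp (-c) * (s ^ 2 * A) ≤ s ^ 2 * A :=
        mul_le_of_le_one_left (mul_nonneg (sq_nonneg s) hA0) hec1
      have h7 : Real.exp (-c) * (s * E + s ^ 2 * A)
          = s * (Real.exp (-c) * E) + Real.exp (-c) * (s ^ 2 * A) := by ring
      rw [h7]
      linarith
    calc 1 + Real.exp (-c) * (Qp - 1)
        ≤ 1 + Real.exp (-c) * (s * E + s ^ 2 * A) := by linarith
      _ ≤ Real.exp (Real.exp (-c) * (s * E + s ^ 2 * A)) := by linarith
      _ ≤ Real.exp (s * μ + A * s ^ 2) := Real.exp_le_exp.mpr h5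
  have hMmle : 1 + Real.exp (-c) * (Qm - 1) ≤ Real.exp (-(s * μ) + A * s ^ 2) := by
    have h3 : Real.exp (-c) * (Qm - 1) ≤ Real.exp (-c) * (-(s * E) + s ^ 2 * A) :=
      mul_le_mul_of_nonneg_left (by linarith) hec0.le
    have h4 := Real.add_one_le_exp (Real.exp (-c) * (-(s * E) + s ^ 2 * A))
    have h5 : Real.exp (-c) * (-(s * E) + s ^ 2 * A) ≤ -(s * μ) + A * s ^ 2 := by
      rw [hμdef]
      have h6 : Real.exp (-c) * (s ^ 2 * A) ≤ s ^ 2 * A :=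
        mul_le_of_le_one_left (mul_nonneg (sq_nonneg s) hA0) hec1
      have h7 : Real.exp (-c) * (-(s * E) + s ^ 2 * A)
          = -(s * (Real.exp (-c) * E)) + Real.exp (-c) * (s ^ 2 * A) := by ring
      rw [h7]
      linarith
    calc 1 + Real.exp (-c) * (Qm - 1)
        ≤ 1 + Real.exp (-c) * (-(s * E) + s ^ 2 * A) := by linarith
      _ ≤ Real.exp (Real.exp (-c) * (-(s * E) + s ^ 2 * A)) := by linarith
      _ ≤ Real.exp (-(s * μ) + A * s ^ 2) := Real.exp_le_exp.mpr h5
  have hMpnn : 0 ≤ 1 + Real.exp (-c) * (Qp - 1) :=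
    hasSum_le (fun k => mul_nonneg (Real.exp_pos _).le (hfnn k)) hasSum_zero hMp
  have hMmnn : 0 ≤ 1 + Real.exp (-c) * (Qm - 1) :=
    hasSum_le (fun k => mul_nonneg (Real.exp_pos _).le (hfnn k)) hasSum_zero hMm
  have hpowp : (1 + Real.exp (-c) * (Qp - 1)) ^ m
      ≤ Real.exp ((m : ℝ) * (s * μ + A * s ^ 2)) := by
    calc (1 + Real.exp (-c) * (Qp - 1)) ^ m
        ≤ (Real.exp (s * μ + A * s ^ 2)) ^ m := pow_le_pow_left₀ hMpnn hMple m
      _ = Real.exp ((m : ℝ) * (s * μ + A * s ^ 2)) := (Real.exp_nat_mul _ m).symm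
  have hpowm : (1 + Real.exp (-c) * (Qm - 1)) ^ m
      ≤ Real.exp ((m : ℝ) * (-(s * μ) + A * s ^ 2)) := by
    calc (1 + Real.exp (-c) * (Qm - 1)) ^ m
        ≤ (Real.exp (-(s * μ) + A * s ^ 2)) ^ m := pow_le_pow_left₀ hMmnn hMmle m
      _ = Real.exp ((m : ℝ) * (-(s * μ) + A * s ^ 2)) := (Real.exp_nat_mul _ m).symm
  have tail_p : (∑' j : ℕ, if (m : ℝ) * μ + δ < (j : ℝ) then P j else 0)
      ≤ Real.exp ((m : ℝ) * A * s ^ 2 - s * δ) := by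
    refine (tsum_upper_tail hPnn hs0 ((m : ℝ) * μ + δ) hMp').trans ?_
    calc Real.exp (-(s * ((m : ℝ) * μ + δ))) * (1 + Real.exp (-c) * (Qp - 1)) ^ m
        ≤ Real.exp (-(s * ((m : ℝ) * μ + δ))) * Real.exp ((m : ℝ) * (s * μ + A * s ^ 2)) :=
          mul_le_mul_of_nonneg_left hpowp (Real.exp_pos _).le
      _ = Real.exp ((m : ℝ) * A * s ^ 2 - s * δ) := by
          rw [← Real.exp_add]; congr 1; ring
  have tail_m : (∑' j : ℕ, if (j : ℝ) < (m : ℝ) * μ - δ then P j else 0)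
      ≤ Real.exp ((m : ℝ) * A * s ^ 2 - s * δ) := by
    refine (tsum_lower_tail hPnn hs0 ((m : ℝ) * μ - δ) hMm').trans ?_
    calc Real.exp (s * ((m : ℝ) * μ - δ)) * (1 + Real.exp (-c) * (Qm - 1)) ^ m
        ≤ Real.exp (s * ((m : ℝ) * μ - δ)) * Real.exp ((m : ℝ) * (-(s * μ) + A * s ^ 2)) :=
          mul_le_mul_of_nonneg_left hpowm (Real.exp_pos _).le
      _ = Real.exp ((m : ℝ) * A * s ^ 2 - s * δ) := by
          rw [← Real.exp_add]; congr 1; ring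
  have hsummand : ∀ j : ℕ, (if δ < |(j : ℝ) - (m : ℝ) * μ| then P j else 0)
      ≤ (if (m : ℝ) * μ + δ < (j : ℝ) then P j else 0)
        + (if (j : ℝ) < (m : ℝ) * μ - δ then P j else 0) := by
    intro j
    have hn1 : (0:ℝ) ≤ (if (m : ℝ) * μ + δ < (j : ℝ) then P j else 0) := by
      split; exacts [hPnn j, le_rfl]
    have hn2 : (0:ℝ) ≤ (if (j : ℝ) < (m : ℝ) * μ - δ then P j else 0) := by
      split; exacts [hPnn j, le_rfl]
    by_cases h : δ < |(j : ℝ) - (m : ℝ) * μ|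
    · rw [if_pos h]
      rcases lt_abs.mp h with h' | h'
      · rw [if_pos (by linarith : (m : ℝ) * μ + δ < (j : ℝ))]
        linarith
      · rw [if_pos (show (j : ℝ) < (m : ℝ) * μ - δ by linarith)]
        linarith
    · rw [if_neg h]; linarith
  have S1 : Summable (fun j : ℕ => if (m : ℝ) * μ + δ < (j : ℝ) then P j else 0) := by
    refine Summable.of_nonneg_of_le (fun j => ?_) (fun j => ?_) hP1.summable
    · split; exacts [hPnn j, le_rfl]
    · split; exacts [le_rfl, hPnn j]
  have S2 : Summable (fun j : ℕ => if (j : ℝ) < (m : ℝ) * μ - δ then P j else 0) := by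
    refine Summable.of_nonneg_of_le (fun j => ?_) (fun j => ?_) hP1.summable
    · split; exacts [hPnn j, le_rfl]
    · split; exacts [le_rfl, hPnn j]
  have S0 : Summable (fun j : ℕ => if δ < |(j : ℝ) - (m : ℝ) * μ| then P j else 0) := by
    refine Summable.of_nonneg_of_le (fun j => ?_) (fun j => ?_) hP1.summable
    · split; exacts [hPnn j, le_rfl]
    · split; exacts [le_rfl, hPnn j]
  calc (∑' j : ℕ, if δ < |(j : ℝ) - (m : ℝ) * μ| then P j else 0)
      ≤ ∑' j : ℕ, ((if (m : ℝ) * μ + δ < (j : ℝ) then P j else 0)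
          + (if (j : ℝ) < (m : ℝ) * μ - δ then P j else 0)) :=
        Summable.tsum_le_tsum hsummand S0 (S1.add S2)
    _ = (∑' j : ℕ, if (m : ℝ) * μ + δ < (j : ℝ) then P j else 0)
          + ∑' j : ℕ, if (j : ℝ) < (m : ℝ) * μ - δ then P j else 0 := Summable.tsum_add S1 S2
    _ ≤ Real.exp ((m : ℝ) * A * s ^ 2 - s * δ) + Real.exp ((m : ℝ) * A * s ^ 2 - s * δ) :=
        add_le_add tail_p tail_m
    _ = 2 * Real.exp ((m : ℝ) * A * s ^ 2 - s * δ) := by ring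

set_option maxHeartbeats 2000000 in
/-- (K = K̃.) On any compact set C inside the open first quadrant and for any error
level ε > 0 there are w > 0 and K₀ > 0 such that for every K ∈ (0, K₀) and every
all-positive state (m,n) with (Km, Kn) ∈ C, the probability that one step of the normed
chain (K U₁, K V₁) deviates from the deterministic Ricker competition map
F(x,y) = (x e^{r−x−by}, y e^{r̃−ax−y}) (applied at (x,y) = (Km, Kn)) by more than ε in
either coordinate is at most e^{−w/K}. -/
theorem normed_chain_follows_deterministic_map
    (r r' a b : ℝ) (ha : 0 < a) (hb : 0 < b)
    (q q' : ℕ → ℝ)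
    (hq : ∀ k, 0 ≤ q k) (hq1 : HasSum q 1)
    (hqmean : HasSum (fun k : ℕ => (k : ℝ) * q k) (Real.exp r))
    (hqexp : ∃ s : ℝ, 0 < s ∧ Summable (fun k : ℕ => Real.exp (s * k) * q k))
    (hq' : ∀ k, 0 ≤ q' k) (hq1' : HasSum q' 1)
    (hqmean' : HasSum (fun k : ℕ => (k : ℝ) * q' k) (Real.exp r'))
    (hqexp' : ∃ s : ℝ, 0 < s ∧ Summable (fun k : ℕ => Real.exp (s * k) * q' k))
    (C : Set (ℝ × ℝ)) (hC : IsCompact C) (hCpos : C ⊆ Set.Ioi 0 ×ˢ Set.Ioi 0)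
    (ε : ℝ) (hε : 0 < ε) :
    ∃ w : ℝ, 0 < w ∧ ∃ K₀ : ℝ, 0 < K₀ ∧
      ∀ K : ℝ, 0 < K → K < K₀ →
        ∀ m n : ℕ, 1 ≤ m → 1 ≤ n → ((K * m : ℝ), (K * n : ℝ)) ∈ C →
          (∑' p' : ℕ × ℕ,
            if ε < |K * (p'.1 : ℝ) - K * m * Real.exp (r - K * m - b * (K * n))| ∨
               ε < |K * (p'.2 : ℝ) - K * n * Real.exp (r' - a * (K * m) - K * n)|
            then rickerKernel a b K K q q' (m, n) p' else 0)
          ≤ Real.exp (-w / K) := by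
  obtain ⟨s₀, hs₀, hS⟩ := hqexp
  obtain ⟨s₀', hs₀', hS'⟩ := hqexp'
  have hAsum : Summable (fun k : ℕ => (k : ℝ) ^ 2 * Real.exp (s₀ / 2 * k) * q k) := by
    refine Summable.of_nonneg_of_le
      (fun k => mul_nonneg (mul_nonneg (sq_nonneg _) (Real.exp_pos _).le) (hq k))
      (fun k => ?_) (hS.mul_left ((2 / (s₀ / 2)) ^ 2))
    have h1 : (k : ℝ) ^ 2 ≤ (2 / (s₀ / 2)) ^ 2 * Real.exp (s₀ / 2 * k) :=
      mySqLeExp (by linarith) k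
    have h2 : Real.exp (s₀ / 2 * (k : ℝ)) * Real.exp (s₀ / 2 * (k : ℝ))
        = Real.exp (s₀ * k) := by
      rw [← Real.exp_add, show s₀ / 2 * (k : ℝ) + s₀ / 2 * (k : ℝ) = s₀ * k by ring]
    calc (k : ℝ) ^ 2 * Real.exp (s₀ / 2 * k) * q k
        ≤ ((2 / (s₀ / 2)) ^ 2 * Real.exp (s₀ / 2 * k)) * Real.exp (s₀ / 2 * k) * q k :=
          mul_le_mul_of_nonneg_right
            (mul_le_mul_of_nonneg_right h1 (Real.exp_pos (s₀ / 2 * (k : ℝ))).le) (hq k)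
      _ = (2 / (s₀ / 2)) ^ 2 * (Real.exp (s₀ * k) * q k) := by
          rw [mul_assoc ((2 / (s₀ / 2)) ^ 2), h2]; ring
  have hAsum' : Summable (fun k : ℕ => (k : ℝ) ^ 2 * Real.exp (s₀' / 2 * k) * q' k) := by
    refine Summable.of_nonneg_of_le
      (fun k => mul_nonneg (mul_nonneg (sq_nonneg _) (Real.exp_pos _).le) (hq' k))
      (fun k => ?_) (hS'.mul_left ((2 / (s₀' / 2)) ^ 2))
    have h1 : (k : ℝ) ^ 2 ≤ (2 / (s₀' / 2)) ^ 2 * Real.exp (s₀' / 2 * k) :=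
      mySqLeExp (by linarith) k
    have h2 : Real.exp (s₀' / 2 * (k : ℝ)) * Real.exp (s₀' / 2 * (k : ℝ))
        = Real.exp (s₀' * k) := by
      rw [← Real.exp_add, show s₀' / 2 * (k : ℝ) + s₀' / 2 * (k : ℝ) = s₀' * k by ring]
    calc (k : ℝ) ^ 2 * Real.exp (s₀' / 2 * k) * q' k
        ≤ ((2 / (s₀' / 2)) ^ 2 * Real.exp (s₀' / 2 * k)) * Real.exp (s₀' / 2 * k) * q' k :=
          mul_le_mul_of_nonneg_right
            (mul_le_mul_of_nonneg_right h1 (Real.exp_pos (s₀' / 2 * (k : ℝ))).le) (hq' k)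
      _ = (2 / (s₀' / 2)) ^ 2 * (Real.exp (s₀' * k) * q' k) := by
          rw [mul_assoc ((2 / (s₀' / 2)) ^ 2), h2]; ring
  set A := ∑' k : ℕ, (k : ℝ) ^ 2 * Real.exp (s₀ / 2 * k) * q k with hAdef
  set A' := ∑' k : ℕ, (k : ℝ) ^ 2 * Real.exp (s₀' / 2 * k) * q' k with hA'def
  have hA : HasSum (fun k : ℕ => (k : ℝ) ^ 2 * Real.exp (s₀ / 2 * k) * q k) A := hAsum.hasSum
  have hA' : HasSum (fun k : ℕ => (k : ℝ) ^ 2 * Real.exp (s₀' / 2 * k) * q' k) A' :=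
    hAsum'.hasSum
  have hA0 : 0 ≤ A := tsum_nonneg fun k =>
    mul_nonneg (mul_nonneg (sq_nonneg _) (Real.exp_pos _).le) (hq k)
  have hA0' : 0 ≤ A' := tsum_nonneg fun k =>
    mul_nonneg (mul_nonneg (sq_nonneg _) (Real.exp_pos _).le) (hq' k)
  obtain ⟨R, hR⟩ := hC.isBounded.exists_norm_le
  set R1 := max R 1 with hR1def
  have hR1 : (0:ℝ) < R1 := lt_of_lt_of_le one_pos (le_max_right _ _)
  set B1 := max A A' + 1 with hB1def
  have hB1 : (0:ℝ) < B1 := by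
    have h := le_max_left A A'
    nlinarith
  have hAB : A ≤ B1 := by
    have h := le_max_left A A'
    nlinarith
  have hAB' : A' ≤ B1 := by
    have h := le_max_right A A'
    nlinarith
  set s := min (min (s₀ / 2) (s₀' / 2)) (ε / (2 * B1 * R1)) with hsdef
  have hs : 0 < s :=
    lt_min (lt_min (by linarith) (by linarith)) (by positivity)
  have hss1 : s ≤ s₀ / 2 := le_trans (min_le_left _ _) (min_le_left _ _)
  have hss2 : s ≤ s₀' / 2 := le_trans (min_le_left _ _) (min_le_right _ _)
  have hsB : s ≤ ε / (2 * B1 * R1) := min_le_right _ _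
  refine ⟨s * ε / 4, by positivity, s * ε / 8, by positivity, ?_⟩
  intro K hK hKK m n hm hn hmem
  have hKm : K * (m : ℝ) ≤ R1 := by
    have h1 := hR _ hmem
    have h2 : ‖(((K * (m : ℝ)), (K * (n : ℝ))) : ℝ × ℝ).1‖
        ≤ ‖(((K * (m : ℝ)), (K * (n : ℝ))) : ℝ × ℝ)‖ := norm_fst_le _
    have h3 : |K * (m : ℝ)| ≤ R := by
      calc |K * (m : ℝ)| = ‖(((K * (m : ℝ)), (K * (n : ℝ))) : ℝ × ℝ).1‖ :=
            (Real.norm_eq_abs _).symm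
        _ ≤ ‖(((K * (m : ℝ)), (K * (n : ℝ))) : ℝ × ℝ)‖ := h2
        _ ≤ R := h1
    calc K * (m : ℝ) ≤ |K * (m : ℝ)| := le_abs_self _
      _ ≤ R := h3
      _ ≤ R1 := le_max_left _ _
  have hKn : K * (n : ℝ) ≤ R1 := by
    have h1 := hR _ hmem
    have h2 : ‖(((K * (m : ℝ)), (K * (n : ℝ))) : ℝ × ℝ).2‖
        ≤ ‖(((K * (m : ℝ)), (K * (n : ℝ))) : ℝ × ℝ)‖ := norm_snd_le _
    have h3 : |K * (n : ℝ)| ≤ R := by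
      calc |K * (n : ℝ)| = ‖(((K * (m : ℝ)), (K * (n : ℝ))) : ℝ × ℝ).2‖ :=
            (Real.norm_eq_abs _).symm
        _ ≤ ‖(((K * (m : ℝ)), (K * (n : ℝ))) : ℝ × ℝ)‖ := h2
        _ ≤ R := h1
    calc K * (n : ℝ) ≤ |K * (n : ℝ)| := le_abs_self _
      _ ≤ R := h3
      _ ≤ R1 := le_max_left _ _
  set c := K * ((m : ℝ) + b * (n : ℝ)) with hcdef
  have hc : 0 ≤ c := by positivity
  set c' := K * (a * (m : ℝ) + (n : ℝ)) with hc'def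
  have hc' : 0 ≤ c' := by positivity
  have hδ : (0:ℝ) ≤ ε / K := (div_pos hε hK).le
  have hev1 : ∀ j : ℕ, (ε < |K * (j : ℝ) - K * m * Real.exp (r - K * m - b * (K * n))|)
      ↔ (ε / K < |(j : ℝ) - (m : ℝ) * (Real.exp (-c) * Real.exp r)|) := by
    intro j
    have hexp : Real.exp (r - K * m - b * (K * n)) = Real.exp (-c) * Real.exp r := by
      rw [← Real.exp_add]
      congr 1
      rw [hcdef]; ring
    rw [hexp, show K * (j : ℝ) - K * m * (Real.exp (-c) * Real.exp r)
        = K * ((j : ℝ) - (m : ℝ) * (Real.exp (-c) * Real.exp r)) by ring,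
      abs_mul, abs_of_pos hK, div_lt_iff₀ hK, mul_comm]
  have hev2 : ∀ j : ℕ, (ε < |K * (j : ℝ) - K * n * Real.exp (r' - a * (K * m) - K * n)|)
      ↔ (ε / K < |(j : ℝ) - (n : ℝ) * (Real.exp (-c') * Real.exp r')|) := by
    intro j
    have hexp : Real.exp (r' - a * (K * m) - K * n) = Real.exp (-c') * Real.exp r' := by
      rw [← Real.exp_add]
      congr 1
      rw [hc'def]; ring
    rw [hexp, show K * (j : ℝ) - K * n * (Real.exp (-c') * Real.exp r')
        = K * ((j : ℝ) - (n : ℝ) * (Real.exp (-c') * Real.exp r')) by ring,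
      abs_mul, abs_of_pos hK, div_lt_iff₀ hK, mul_comm]
  set P1 := convPow (modPMF c q) m with hP1def
  set P2 := convPow (modPMF c' q') n with hP2def
  have hP1nn : ∀ j, 0 ≤ P1 j := convPow_nonneg (modPMF_nonneg hc hq hq1) m
  have hP2nn : ∀ j, 0 ≤ P2 j := convPow_nonneg (modPMF_nonneg hc' hq' hq1') n
  have hP1sum : HasSum P1 1 := hasSum_convPow_modPMF hc hq hq1 m
  have hP2sum : HasSum P2 1 := hasSum_convPow_modPMF hc' hq' hq1' n
  have key : ∀ p' : ℕ × ℕ,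
      (if ε < |K * (p'.1 : ℝ) - K * m * Real.exp (r - K * m - b * (K * n))| ∨
          ε < |K * (p'.2 : ℝ) - K * n * Real.exp (r' - a * (K * m) - K * n)|
        then rickerKernel a b K K q q' (m, n) p' else 0)
      = (if (ε / K < |(p'.1 : ℝ) - (m : ℝ) * (Real.exp (-c) * Real.exp r)|) ∨
            (ε / K < |(p'.2 : ℝ) - (n : ℝ) * (Real.exp (-c') * Real.exp r')|)
          then P1 p'.1 * P2 p'.2 else 0) := by
    intro p'
    rw [if_congr (or_congr (hev1 p'.1) (hev2 p'.2)) rfl rfl]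
    split_ifs with h
    · rfl
    · rfl
  rw [tsum_congr key]
  set u : ℕ → ℝ := fun j =>
    if ε / K < |(j : ℝ) - (m : ℝ) * (Real.exp (-c) * Real.exp r)| then P1 j else 0 with hudef
  set v : ℕ → ℝ := fun j =>
    if ε / K < |(j : ℝ) - (n : ℝ) * (Real.exp (-c') * Real.exp r')| then P2 j else 0 with hvdef
  have hu_nn : ∀ j, 0 ≤ u j := by
    intro j; rw [hudef]; dsimp only; split; exacts [hP1nn j, le_rfl]
  have hv_nn : ∀ j, 0 ≤ v j := by
    intro j; rw [hvdef]; dsimp only; split; exacts [hP2nn j, le_rfl]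
  have hu_le : ∀ j, u j ≤ P1 j := by
    intro j; rw [hudef]; dsimp only; split; exacts [le_rfl, hP1nn j]
  have hv_le : ∀ j, v j ≤ P2 j := by
    intro j; rw [hvdef]; dsimp only; split; exacts [le_rfl, hP2nn j]
  have hu_sum : Summable u := Summable.of_nonneg_of_le hu_nn hu_le hP1sum.summable
  have hv_sum : Summable v := Summable.of_nonneg_of_le hv_nn hv_le hP2sum.summable
  have hU : (∑' j : ℕ, u j) ≤ 2 * Real.exp ((m : ℝ) * A * s ^ 2 - s * (ε / K)) :=
    coord_dev_bound hq hq1 hqmean hs₀ hS hA hs hss1 hc m hδ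
  have hV : (∑' j : ℕ, v j) ≤ 2 * Real.exp ((n : ℝ) * A' * s ^ 2 - s * (ε / K)) :=
    coord_dev_bound hq' hq1' hqmean' hs₀' hS' hA' hs hss2 hc' n hδ
  have hexp_bound : ∀ (N : ℕ) (AA : ℝ), 0 ≤ AA → AA ≤ B1 → K * (N : ℝ) ≤ R1 →
      (N : ℝ) * AA * s ^ 2 - s * (ε / K) ≤ -(s * ε) / (2 * K) := by
    intro N AA hAA0 hAAB hKN
    have hNle : (N : ℝ) ≤ R1 / K := by
      rw [le_div_iff₀ hK]; nlinarith
    have hN0 : (0:ℝ) ≤ (N : ℝ) := Nat.cast_nonneg N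
    have h1 : (N : ℝ) * AA ≤ (R1 / K) * B1 :=
      mul_le_mul hNle hAAB hAA0 (by positivity)
    have h2 : (N : ℝ) * AA * s ^ 2 ≤ (R1 / K) * B1 * s ^ 2 := by
      nlinarith [sq_nonneg s]
    have h3 : (R1 / K) * B1 * s ^ 2 ≤ (R1 / K) * B1 * (ε / (2 * B1 * R1)) * s := by
      have hnn : (0:ℝ) ≤ (R1 / K) * B1 * s := by positivity
      calc (R1 / K) * B1 * s ^ 2 = ((R1 / K) * B1 * s) * s := by ring
        _ ≤ ((R1 / K) * B1 * s) * (ε / (2 * B1 * R1)) :=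
            mul_le_mul_of_nonneg_left hsB hnn
        _ = (R1 / K) * B1 * (ε / (2 * B1 * R1)) * s := by ring
    have h4 : (R1 / K) * B1 * (ε / (2 * B1 * R1)) = ε / (2 * K) := by
      field_simp
    have h5 : (N : ℝ) * AA * s ^ 2 ≤ ε / (2 * K) * s := by
      calc (N : ℝ) * AA * s ^ 2 ≤ (R1 / K) * B1 * s ^ 2 := h2
        _ ≤ (R1 / K) * B1 * (ε / (2 * B1 * R1)) * s := h3
        _ = ε / (2 * K) * s := by rw [h4]
    have h6 : s * (ε / K) = 2 * (ε / (2 * K) * s) := by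
      field_simp
    have h7 : -(s * ε) / (2 * K) = -(ε / (2 * K) * s) := by
      field_simp
    rw [h7]
    linarith
  have hUfin : (∑' j : ℕ, u j) ≤ 2 * Real.exp (-(s * ε) / (2 * K)) := by
    refine hU.trans ?_
    have h := Real.exp_le_exp.mpr (hexp_bound m A hA0 hAB hKm)
    linarith
  have hVfin : (∑' j : ℕ, v j) ≤ 2 * Real.exp (-(s * ε) / (2 * K)) := by
    refine hV.trans ?_
    have h := Real.exp_le_exp.mpr (hexp_bound n A' hA0' hAB' hKn)
    linarith
  have huv : ∀ p' : ℕ × ℕ,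
      (if (ε / K < |(p'.1 : ℝ) - (m : ℝ) * (Real.exp (-c) * Real.exp r)|) ∨
          (ε / K < |(p'.2 : ℝ) - (n : ℝ) * (Real.exp (-c') * Real.exp r')|)
        then P1 p'.1 * P2 p'.2 else 0)
      ≤ u p'.1 * P2 p'.2 + P1 p'.1 * v p'.2 := by
    intro p'
    have hn1 : 0 ≤ u p'.1 * P2 p'.2 := mul_nonneg (hu_nn _) (hP2nn _)
    have hn2 : 0 ≤ P1 p'.1 * v p'.2 := mul_nonneg (hP1nn _) (hv_nn _)
    by_cases h1 : ε / K < |(p'.1 : ℝ) - (m : ℝ) * (Real.exp (-c) * Real.exp r)|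
    · rw [if_pos (Or.inl h1)]
      have hu1 : u p'.1 = P1 p'.1 := by rw [hudef]; exact if_pos h1
      rw [hu1] at hn1 ⊢
      linarith
    · by_cases h2 : ε / K < |(p'.2 : ℝ) - (n : ℝ) * (Real.exp (-c') * Real.exp r')|
      · rw [if_pos (Or.inr h2)]
        have hv1 : v p'.2 = P2 p'.2 := by rw [hvdef]; exact if_pos h2
        rw [hv1] at hn2 ⊢
        linarith
      · rw [if_neg (by tauto)]
        linarith
  have hprodsum1 : Summable (fun p' : ℕ × ℕ => u p'.1 * P2 p'.2) :=
    Summable.mul_of_nonneg hu_sum hP2sum.summable (fun j => hu_nn j) (fun j => hP2nn j)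
  have hprodsum2 : Summable (fun p' : ℕ × ℕ => P1 p'.1 * v p'.2) :=
    Summable.mul_of_nonneg hP1sum.summable hv_sum (fun j => hP1nn j) (fun j => hv_nn j)
  have hprod1 : HasSum (fun p' : ℕ × ℕ => u p'.1 * P2 p'.2) ((∑' j : ℕ, u j) * 1) :=
    HasSum.mul hu_sum.hasSum hP2sum hprodsum1
  have hprod2 : HasSum (fun p' : ℕ × ℕ => P1 p'.1 * v p'.2) (1 * (∑' j : ℕ, v j)) :=
    HasSum.mul hP1sum hv_sum.hasSum hprodsum2
  have hF : HasSum (fun p' : ℕ × ℕ => u p'.1 * P2 p'.2 + P1 p'.1 * v p'.2)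
      ((∑' j : ℕ, u j) * 1 + 1 * (∑' j : ℕ, v j)) := hprod1.add hprod2
  have hLHSnn : ∀ p' : ℕ × ℕ,
      0 ≤ (if (ε / K < |(p'.1 : ℝ) - (m : ℝ) * (Real.exp (-c) * Real.exp r)|) ∨
          (ε / K < |(p'.2 : ℝ) - (n : ℝ) * (Real.exp (-c') * Real.exp r')|)
        then P1 p'.1 * P2 p'.2 else 0) := by
    intro p'
    split
    · exact mul_nonneg (hP1nn _) (hP2nn _)
    · exact le_rfl
  have hLHSsum : Summable (fun p' : ℕ × ℕ =>
      if (ε / K < |(p'.1 : ℝ) - (m : ℝ) * (Real.exp (-c) * Real.exp r)|) ∨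
          (ε / K < |(p'.2 : ℝ) - (n : ℝ) * (Real.exp (-c') * Real.exp r')|)
        then P1 p'.1 * P2 p'.2 else 0) :=
    Summable.of_nonneg_of_le hLHSnn huv hF.summable
  have h4exp : (4 : ℝ) ≤ Real.exp 2 := by
    have h := Real.add_one_le_exp 1
    have h2 : Real.exp 1 * Real.exp 1 = Real.exp 2 := by
      rw [← Real.exp_add]; norm_num
    nlinarith [Real.exp_pos 1]
  have h5 : (2 : ℝ) ≤ s * ε / (4 * K) := by
    rw [le_div_iff₀ (by positivity)]
    have hKlt : K < s * ε / 8 := hKK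
    nlinarith
  calc (∑' p' : ℕ × ℕ,
      if (ε / K < |(p'.1 : ℝ) - (m : ℝ) * (Real.exp (-c) * Real.exp r)|) ∨
          (ε / K < |(p'.2 : ℝ) - (n : ℝ) * (Real.exp (-c') * Real.exp r')|)
        then P1 p'.1 * P2 p'.2 else 0)
      ≤ ∑' p' : ℕ × ℕ, (u p'.1 * P2 p'.2 + P1 p'.1 * v p'.2) :=
        Summable.tsum_le_tsum huv hLHSsum hF.summable
    _ = (∑' j : ℕ, u j) * 1 + 1 * (∑' j : ℕ, v j) := hF.tsum_eq
    _ = (∑' j : ℕ, u j) + (∑' j : ℕ, v j) := by ring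
    _ ≤ 2 * Real.exp (-(s * ε) / (2 * K)) + 2 * Real.exp (-(s * ε) / (2 * K)) :=
        add_le_add hUfin hVfin
    _ = 4 * Real.exp (-(s * ε) / (2 * K)) := by ring
    _ ≤ Real.exp 2 * Real.exp (-(s * ε) / (2 * K)) :=
        mul_le_mul_of_nonneg_right h4exp (Real.exp_pos _).le
    _ = Real.exp (2 + -(s * ε) / (2 * K)) := (Real.exp_add _ _).symm
    _ ≤ Real.exp (-(s * ε / 4) / K) := by
        refine Real.exp_le_exp.mpr ?_
        have he1 : -(s * ε) / (2 * K) = -(2 * (s * ε / (4 * K))) := by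
          field_simp; ring
        have he2 : -(s * ε / 4) / K = -(s * ε / (4 * K)) := by
          field_simp
        rw [he1, he2]
        linarith
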